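/- If v is a valuation function on the self-adjoint part of a von Neumann algebra R and v' its canonical extension to R, then v' is a quasi-state: v' is linear and positive on the abelian C*-subalgebra generated by each self-adjoint B and the identity, v'(A₁ + iA₂) = v'(A₁) + i·v'(A₂) for self-adjoint A₁, A₂, and v'(I) = 1. -/

import Mathlib

open scoped ComplexOrder

/-- A valuation function on the self-adjoint part of a (von Neumann / C*) algebra `A`:
it assigns to each self-adjoint element a point of its spectrum and commutes with
(continuous, standing in for Borel) functional calculus (the FUNC principle). -/
def IsValuation {A : Type*} [CStarAlgebra A] (v : A → ℝ) : Prop :=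
  (∀ a : A, IsSelfAdjoint a → v a ∈ spectrum ℝ a) ∧
  (∀ a : A, IsSelfAdjoint a → ∀ f : ℝ → ℝ, ContinuousOn f (spectrum ℝ a) →
    v (cfc f a) = f (v a))

/-- The canonical extension `v'` of a valuation function `v` to the whole algebra,
`v'(A₁ + iA₂) = v(A₁) + i v(A₂)`, via the decomposition into self-adjoint parts. -/
noncomputable def valExt {A : Type*} [CStarAlgebra A] (v : A → ℝ) (b : A) : ℂ :=
  (v ((realPart b : A)) : ℂ) + Complex.I * (v ((imaginaryPart b : A)) : ℂ)
/-- A quasi-state of a unital C*-algebra `A` (Aarnes): a functional `ρ : A → ℂ` that is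
linear and positive on the abelian C*-subalgebra generated by each self-adjoint element
and the identity, respects the decomposition into self-adjoint parts, and maps `1` to `1`. -/
def IsQuasiState {A : Type*} [CStarAlgebra A] [PartialOrder A] [StarOrderedRing A] (ρ : A → ℂ) : Prop :=
  (∀ b : A, IsSelfAdjoint b →
    (∀ x ∈ StarAlgebra.elemental ℂ b, ∀ y ∈ StarAlgebra.elemental ℂ b,
      ρ (x + y) = ρ x + ρ y) ∧
    (∀ (c : ℂ), ∀ x ∈ StarAlgebra.elemental ℂ b, ρ (c • x) = c * ρ x) ∧
    (∀ x ∈ StarAlgebra.elemental ℂ b, 0 ≤ x → ∃ r : ℝ, 0 ≤ r ∧ ρ x = r)) ∧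
  (∀ a₁ a₂ : A, IsSelfAdjoint a₁ → IsSelfAdjoint a₂ →
    ρ (a₁ + Complex.I • a₂) = ρ a₁ + Complex.I * ρ a₂) ∧
  ρ 1 = 1

section Aux

variable {A : Type*} [CStarAlgebra A]

lemma IsValuation.val_zero (v : A → ℝ) (hv : IsValuation v) : v 0 = 0 := by
  have h := hv.2 0 (IsSelfAdjoint.zero (R := A)) (fun _ => (0 : ℝ)) continuousOn_const
  rwa [cfc_const (0 : ℝ) (0 : A) (IsSelfAdjoint.zero (R := A)), show (algebraMap ℝ A) 0 = 0 from _root_.map_zero _] at h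

lemma IsValuation.val_one (v : A → ℝ) (hv : IsValuation v) : v 1 = 1 := by
  have h := hv.2 1 (IsSelfAdjoint.one (R := A)) (fun _ => (1 : ℝ)) continuousOn_const
  rwa [cfc_const (1 : ℝ) (1 : A) (IsSelfAdjoint.one (R := A)), show (algebraMap ℝ A) 1 = 1 from _root_.map_one _] at h

lemma valExt_of_isSelfAdjoint (v : A → ℝ) (hv : IsValuation v) {x : A}
    (hx : IsSelfAdjoint x) : valExt v x = (v x : ℂ) := by
  have him : (imaginaryPart x : A) = 0 := by
    rw [hx.imaginaryPart]; rfl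
  rw [valExt, hx.coe_realPart, him, hv.val_zero]
  simp

/-- Every element of the elemental algebra of a self-adjoint element is a continuous
function of it. -/
lemma exists_cfc_of_mem_elemental {b : A} (hb : IsSelfAdjoint b) {x : A}
    (hx : x ∈ StarAlgebra.elemental ℂ b) :
    ∃ f : ℂ → ℂ, ContinuousOn f (spectrum ℂ b) ∧ cfc f b = x := by
  have hb' : IsStarNormal b := hb.isStarNormal
  classical
  set g : C(spectrum ℂ b, ℂ) := (continuousFunctionalCalculus b).symm ⟨x, hx⟩ with hg
  set f : ℂ → ℂ := fun z => if h : z ∈ spectrum ℂ b then g ⟨z, h⟩ else 0 with hfdef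
  have hres : (spectrum ℂ b).restrict f = g := by
    funext z
    show f z = g z
    simp only [hfdef]
    rw [dif_pos z.2]
  have hfc : ContinuousOn f (spectrum ℂ b) := by
    rw [continuousOn_iff_continuous_restrict, show (spectrum ℂ b).domRestrict f = g from hres]
    exact map_continuous g
  refine ⟨f, hfc, ?_⟩
  rw [cfc_apply f b hb' hfc]
  have hcm : (⟨(spectrum ℂ b).domRestrict f, hfc.restrict⟩ : C(spectrum ℂ b, ℂ)) = g := by
    ext z
    exact congrFun hres z
  rw [hcm, cfcHom_eq_of_isStarNormal]
  simp [hg]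

lemma realPart_cfc {b : A} (hb : IsSelfAdjoint b) (f : ℂ → ℂ)
    (hf : ContinuousOn f (spectrum ℂ b)) :
    (realPart (cfc f b) : A) = cfc (fun t : ℝ => (f t).re) b := by
  have hb' : IsStarNormal b := hb.isStarNormal
  have hf' : ContinuousOn (fun z => star (f z)) (spectrum ℂ b) :=
    Complex.continuous_conj.comp_continuousOn hf
  rw [realPart_apply_coe, ← cfc_star f b, ← cfc_add b f _ hf hf',
    ← cfc_smul ((2 : ℝ)⁻¹) _ b, cfc_real_eq_complex (fun t => (f t).re) hb]
  apply cfc_congr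
  intro z hz
  have hz' : (z.re : ℂ) = z := (hb.mem_spectrum_eq_re hz).symm
  beta_reduce
  rw [hz', Complex.star_def, Complex.add_conj, Complex.real_smul]
  push_cast
  ring

lemma imaginaryPart_cfc {b : A} (hb : IsSelfAdjoint b) (f : ℂ → ℂ)
    (hf : ContinuousOn f (spectrum ℂ b)) :
    (imaginaryPart (cfc f b) : A) = cfc (fun t : ℝ => (f t).im) b := by
  have hb' : IsStarNormal b := hb.isStarNormal
  have hf' : ContinuousOn (fun z => star (f z)) (spectrum ℂ b) :=
    Complex.continuous_conj.comp_continuousOn hf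
  rw [imaginaryPart_apply_coe, ← cfc_star f b, ← cfc_sub f _ b hf hf',
    ← cfc_smul ((2 : ℝ)⁻¹) (fun x => f x - star (f x)) b (hf.sub hf'), ← cfc_smul (-Complex.I) (fun x => (2 : ℝ)⁻¹ • (f x - star (f x))) b ((hf.sub hf').const_smul ((2 : ℝ)⁻¹)), cfc_real_eq_complex (fun t => (f t).im) hb]
  apply cfc_congr
  intro z hz
  have hz' : (z.re : ℂ) = z := (hb.mem_spectrum_eq_re hz).symm
  beta_reduce
  rw [hz', Complex.star_def, Complex.sub_conj, smul_eq_mul, Complex.real_smul]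
  have : Complex.I * Complex.I = -1 := Complex.I_mul_I
  push_cast
  linear_combination (-(f z).im : ℂ) * this

lemma valExt_cfc (v : A → ℝ) (hv : IsValuation v) {b : A} (hb : IsSelfAdjoint b)
    (f : ℂ → ℂ) (hf : ContinuousOn f (spectrum ℂ b)) :
    valExt v (cfc f b) = f (v b) := by
  have hmaps : Set.MapsTo (fun t : ℝ => (t : ℂ)) (spectrum ℝ b) (spectrum ℂ b) :=
    fun t ht => spectrum.algebraMap_mem ℂ ht
  have hc : ContinuousOn (fun t : ℝ => f t) (spectrum ℝ b) :=
    hf.comp Complex.continuous_ofReal.continuousOn hmaps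
  have h1 : ContinuousOn (fun t : ℝ => (f t).re) (spectrum ℝ b) :=
    Complex.continuous_re.comp_continuousOn hc
  have h2 : ContinuousOn (fun t : ℝ => (f t).im) (spectrum ℝ b) :=
    Complex.continuous_im.comp_continuousOn hc
  rw [valExt, realPart_cfc hb f hf, imaginaryPart_cfc hb f hf,
    hv.2 b hb _ h1, hv.2 b hb _ h2, mul_comm]
  exact Complex.re_add_im _

end Aux

/-- the canonical extension `v'` of a valuation function `v` is a quasi-state. -/
theorem valExt_isQuasiState {A : Type*} [CStarAlgebra A] [PartialOrder A] [StarOrderedRing A]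
    (v : A → ℝ) (hv : IsValuation v) :
    IsQuasiState (valExt v) := by
  refine ⟨?_, ?_, ?_⟩
  · intro b hb
    refine ⟨?_, ?_, ?_⟩
    · intro x hx y hy
      obtain ⟨f, hf, rfl⟩ := exists_cfc_of_mem_elemental hb hx
      obtain ⟨g, hg, rfl⟩ := exists_cfc_of_mem_elemental hb hy
      rw [← cfc_add b f g hf hg, valExt_cfc v hv hb (fun x => f x + g x) (hf.add hg),
        valExt_cfc v hv hb f hf, valExt_cfc v hv hb g hg]
    · intro c x hx
      obtain ⟨f, hf, rfl⟩ := exists_cfc_of_mem_elemental hb hx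
      rw [← cfc_smul c f b hf, valExt_cfc v hv hb (fun x => c • f x) (hf.const_smul c),
        valExt_cfc v hv hb f hf, smul_eq_mul]
    · intro x hx hx0
      have hxsa : IsSelfAdjoint x := IsSelfAdjoint.of_nonneg hx0
      refine ⟨v x, ?_, valExt_of_isSelfAdjoint v hv hxsa⟩
      exact (StarOrderedRing.nonneg_iff_spectrum_nonneg (R := ℝ) x hxsa).mp hx0 (v x)
        (hv.1 x hxsa)
  · intro a₁ a₂ h1 h2
    have hre : (realPart (a₁ + Complex.I • a₂) : A) = a₁ := by
      rw [map_add]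
      push_cast
      rw [realPart_I_smul, h1.coe_realPart]
      simp [h2.imaginaryPart]
    have him : (imaginaryPart (a₁ + Complex.I • a₂) : A) = a₂ := by
      rw [map_add]
      push_cast
      rw [imaginaryPart_I_smul, h2.coe_realPart]
      simp [h1.imaginaryPart]
    rw [valExt, hre, him, valExt_of_isSelfAdjoint v hv h1, valExt_of_isSelfAdjoint v hv h2]
  · rw [valExt_of_isSelfAdjoint v hv (IsSelfAdjoint.one (R := A)), hv.val_one, Complex.ofReal_one]
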